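/- Let λ''(0) < 0, μ > 0, μ_* > 0, σ ∈ (0,2], k_* > 0. Then there is a constant C > 0 such that for all ε ∈ (0,1) and all k with |k| ≤ k_*/ε: (ε|k|)^{σ+2} / [(-(1/2)λ''(0)ε² + μ_*ε²k²)(1 + k²)] ≤ C·ε^σ. -/
import Mathlib


open Real

theorem stmt_11 (l2 μ μstar σ kstar : ℝ)
    (hl2 : l2 < 0) (hμ : 0 < μ) (hμstar : 0 < μstar)
    (hσ : 0 < σ ∧ σ ≤ 2) (hk : 0 < kstar) :
    ∃ C > 0, ∀ ε : ℝ, 0 < ε → ε < 1 → ∀ k : ℝ, |k| ≤ kstar / ε →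
      (ε * |k|) ^ (σ + 2) /
        ((-(1 / 2) * l2 * ε ^ 2 + μstar * ε ^ 2 * k ^ 2) * (1 + k ^ 2)) ≤ C * ε ^ σ := by
  obtain ⟨hσ0, hσ2⟩ := hσ
  set a : ℝ := -(1 / 2) * l2 with ha_def
  have ha : 0 < a := by simp only [ha_def]; linarith
  set c : ℝ := min a μstar with hc_def
  have hc : 0 < c := lt_min ha hμstar
  refine ⟨1 / c, by positivity, ?_⟩
  intro ε hε hε1 k hkk
  have h1k : (0:ℝ) < 1 + k ^ 2 := by positivity
  have hden : 0 < (a * ε ^ 2 + μstar * ε ^ 2 * k ^ 2) * (1 + k ^ 2) := by positivity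
  -- key pointwise bound
  have step1 : |k| ^ (σ + 2) ≤ (1 + k ^ 2) ^ ((σ + 2) / 2) := by
    have h1 : |k| ^ (σ + 2) = (|k| ^ (2:ℝ)) ^ ((σ + 2) / 2) := by
      rw [← Real.rpow_mul (abs_nonneg k)]
      congr 1
      ring
    rw [h1]
    apply Real.rpow_le_rpow (by positivity) _ (by positivity)
    rw [Real.rpow_two, sq_abs]
    linarith
  have step2 : (1 + k ^ 2) ^ ((σ + 2) / 2) ≤ (1 + k ^ 2) ^ 2 := by
    calc (1 + k ^ 2) ^ ((σ + 2) / 2) ≤ (1 + k ^ 2) ^ (2:ℝ) := by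
          apply Real.rpow_le_rpow_of_exponent_le (by nlinarith) (by linarith)
      _ = (1 + k ^ 2) ^ 2 := Real.rpow_two _
  have step3 : c * (1 + k ^ 2) ^ 2 ≤ (a + μstar * k ^ 2) * (1 + k ^ 2) := by
    have h1 : c ≤ a := min_le_left _ _
    have h2 : c ≤ μstar := min_le_right _ _
    have h3 : c * (1 + k ^ 2) ≤ a + μstar * k ^ 2 := by nlinarith [sq_nonneg k]
    calc c * (1 + k ^ 2) ^ 2 = c * (1 + k ^ 2) * (1 + k ^ 2) := by ring
      _ ≤ (a + μstar * k ^ 2) * (1 + k ^ 2) := mul_le_mul_of_nonneg_right h3 h1k.le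
  have key : |k| ^ (σ + 2) ≤ 1 / c * ((a + μstar * k ^ 2) * (1 + k ^ 2)) := by
    calc |k| ^ (σ + 2) ≤ (1 + k ^ 2) ^ 2 := step1.trans step2
      _ = 1 / c * (c * (1 + k ^ 2) ^ 2) := by field_simp
      _ ≤ 1 / c * ((a + μstar * k ^ 2) * (1 + k ^ 2)) :=
          mul_le_mul_of_nonneg_left step3 (by positivity)
  have hεk : (ε * |k|) ^ (σ + 2) = ε ^ σ * ε ^ 2 * |k| ^ (σ + 2) := by
    rw [Real.mul_rpow hε.le (abs_nonneg k), Real.rpow_add hε, Real.rpow_two]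
  rw [div_le_iff₀ hden, hεk]
  calc ε ^ σ * ε ^ 2 * |k| ^ (σ + 2)
      ≤ ε ^ σ * ε ^ 2 * (1 / c * ((a + μstar * k ^ 2) * (1 + k ^ 2))) := by
        apply mul_le_mul_of_nonneg_left key (by positivity)
    _ = 1 / c * ε ^ σ * ((a * ε ^ 2 + μstar * ε ^ 2 * k ^ 2) * (1 + k ^ 2)) := by ring
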